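/- arXiv:2305.18866 — 2 statements merged into one kernel-verified Lean document; each statement's English description precedes it below -/
import Mathlib

section
/- Let T be an edge-weighted tree, u, v ∈ V(T), and let p be the unique u-v-path in T. Then the leaf-status of p satisfies ℓ_T(p) = (ℓ_T(u) + ℓ_T(v) - |L(T)|·d_T(u,v))/2, where L(T) is the set of leaves of T. -/
open SimpleGraph Finset

noncomputable section

variable {V : Type*}

/-- The weight of a walk: sum of the weights of its edges. -/
def walkWeight {G : SimpleGraph V} (w : Sym2 V → ℝ) {x y : V} (p : G.Walk x y) : ℝ :=
  (p.edges.map w).sum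

/-- The unique path between two vertices of a tree. -/
noncomputable def tpath {G : SimpleGraph V} (hT : G.IsTree) (x y : V) : G.Walk x y :=
  (hT.existsUnique_path x y).choose

/-- The weighted distance between two vertices of a tree: the weight of the unique path. -/
noncomputable def tdist {G : SimpleGraph V} (hT : G.IsTree) (w : Sym2 V → ℝ) (x y : V) : ℝ :=
  walkWeight w (tpath hT x y)

/-- The distance from a vertex `x` to a path `p`: the minimum distance from `x`
to a vertex on `p`. -/
noncomputable def distToPath {G : SimpleGraph V} (hT : G.IsTree) (w : Sym2 V → ℝ)
    (x : V) {a b : V} (p : G.Walk a b) : ℝ :=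
  sInf {r | ∃ y ∈ p.support, r = tdist hT w x y}

/-- The set of leaves of a graph. -/
def leaves (G : SimpleGraph V) [Fintype V] [DecidableRel G.Adj] : Finset V :=
  Finset.univ.filter (fun v => G.degree v = 1)

/-- The leaf-status of a vertex: the sum of its distances to all leaves. -/
noncomputable def leafStatus {G : SimpleGraph V} [Fintype V] [DecidableRel G.Adj]
    (hT : G.IsTree) (w : Sym2 V → ℝ) (u : V) : ℝ :=
  ∑ x ∈ leaves G, tdist hT w u x

/-- The leaf-status of a path: the sum of the distances of all leaves to the path. -/
noncomputable def pathLeafStatus {G : SimpleGraph V} [Fintype V] [DecidableRel G.Adj]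
    (hT : G.IsTree) (w : Sym2 V → ℝ) {a b : V} (p : G.Walk a b) : ℝ :=
  ∑ x ∈ leaves G, distToPath hT w x p

/-- `Lside hT w u v` is the set `L^{uv}_u` of leaves strictly closer to `u` than to `v`. -/
noncomputable def Lside {G : SimpleGraph V} [Fintype V] [DecidableRel G.Adj]
    (hT : G.IsTree) (w : Sym2 V → ℝ) (u v : V) : Finset V :=
  (leaves G).filter (fun x => tdist hT w x u < tdist hT w x v)


section Helpers

variable {G : SimpleGraph V}

lemma walkWeight_append (w : Sym2 V → ℝ) {x y z : V} (p : G.Walk x y) (q : G.Walk y z) :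
    walkWeight w (p.append q) = walkWeight w p + walkWeight w q := by
  simp [walkWeight, Walk.edges_append]

lemma walkWeight_reverse (w : Sym2 V → ℝ) {x y : V} (p : G.Walk x y) :
    walkWeight w p.reverse = walkWeight w p := by
  rw [walkWeight, walkWeight, Walk.edges_reverse, List.map_reverse, List.sum_reverse]

lemma walkWeight_nonneg {w : Sym2 V → ℝ} (hw : ∀ e ∈ G.edgeSet, 0 < w e)
    {x y : V} (p : G.Walk x y) : 0 ≤ walkWeight w p := by
  apply List.sum_nonneg
  intro r hr
  rcases List.mem_map.1 hr with ⟨e, he, rfl⟩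
  exact (hw e (p.edges_subset_edgeSet he)).le

lemma tpath_isPath (hT : G.IsTree) (x y : V) : (tpath hT x y).IsPath :=
  (hT.existsUnique_path x y).choose_spec.1

lemma tdist_eq (hT : G.IsTree) (w : Sym2 V → ℝ) {x y : V} (p : G.Walk x y)
    (hp : p.IsPath) : tdist hT w x y = walkWeight w p := by
  have : p = tpath hT x y := (hT.existsUnique_path x y).choose_spec.2 p hp
  rw [tdist, ← this]

lemma tdist_self (hT : G.IsTree) (w : Sym2 V → ℝ) (x : V) : tdist hT w x x = 0 := by
  rw [tdist_eq hT w Walk.nil Walk.IsPath.nil]; simp [walkWeight]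

lemma tdist_symm (hT : G.IsTree) (w : Sym2 V → ℝ) (x y : V) :
    tdist hT w x y = tdist hT w y x := by
  rw [tdist_eq hT w ((tpath hT y x).reverse) ((tpath_isPath hT y x).reverse),
    walkWeight_reverse, tdist]

lemma tdist_nonneg (hT : G.IsTree) {w : Sym2 V → ℝ} (hw : ∀ e ∈ G.edgeSet, 0 < w e)
    (x y : V) : 0 ≤ tdist hT w x y :=
  walkWeight_nonneg hw _

/-- Two paths with supports meeting only at the common endpoint concatenate to a path. -/
lemma isPath_append {x y z : V} {p : G.Walk x y} {q : G.Walk y z}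
    (hp : p.IsPath) (hq : q.IsPath)
    (h : ∀ a, a ∈ p.support → a ∈ q.support → a = y) : (p.append q).IsPath := by
  rw [Walk.isPath_def, Walk.support_append]
  apply List.Nodup.append hp.support_nodup hq.support_nodup.tail
  intro a hap haq
  have haq' : a ∈ q.support := by
    have := q.support_eq_cons
    rw [this]; exact List.mem_cons_of_mem _ haq
  have hay : a = y := h a hap haq'
  subst hay
  have hnd := hq.support_nodup
  rw [q.support_eq_cons] at hnd
  exact (List.nodup_cons.1 hnd).1 haq

/-- A path between two vertices on the support of a path stays within that support. -/
lemma exists_path_within [DecidableEq V] {u v : V} {p : G.Walk u v} (hp : p.IsPath) {m y : V}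
    (hm : m ∈ p.support) (hy : y ∈ p.support) :
    ∃ s : G.Walk m y, s.IsPath ∧ ∀ z ∈ s.support, z ∈ p.support := by
  have hsplit := p.take_spec hy
  by_cases hmy : m ∈ (p.takeUntil y hy).support
  · refine ⟨(p.takeUntil y hy).dropUntil m hmy, (hp.takeUntil hy).dropUntil hmy, ?_⟩
    intro z hz
    exact p.support_takeUntil_subset hy ((p.takeUntil y hy).support_dropUntil_subset hmy hz)
  · have hmd : m ∈ (p.dropUntil y hy).support := by
      have := hm
      rw [← hsplit, Walk.mem_support_append_iff] at this
      tauto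
    refine ⟨((p.dropUntil y hy).takeUntil m hmd).reverse,
      ((hp.dropUntil hy).takeUntil hmd).reverse, ?_⟩
    intro z hz
    rw [Walk.support_reverse, List.mem_reverse] at hz
    exact p.support_dropUntil_subset hy ((p.dropUntil y hy).support_takeUntil_subset hmd hz)

/-- First-hit lemma: a path `q` from `x` ending on the support of `p` has an initial
segment meeting the support of `p` only at its endpoint. -/
lemma first_hit {a b : V} (p : G.Walk a b) {x u : V} (q : G.Walk x u) :
    q.IsPath → u ∈ p.support →
    ∃ m, m ∈ p.support ∧ ∃ r : G.Walk x m, r.IsPath ∧ r.support ⊆ q.support ∧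
      ∀ z ∈ r.support, z ∈ p.support → z = m := by
  induction q with
  | nil =>
    exact fun _ hx => ⟨_, hx, Walk.nil, Walk.IsPath.nil, by simp, by simp⟩
  | @cons x' y' u' h q' ih =>
    intro hq hu
    obtain ⟨hq', hx'q⟩ := (Walk.cons_isPath_iff _ _).1 hq
    by_cases hx : x' ∈ p.support
    · exact ⟨x', hx, Walk.nil, Walk.IsPath.nil, by simp, by simp⟩
    · obtain ⟨m, hm, r', hr', hsub, hlast⟩ := ih hq' hu
      have hx' : x' ∉ r'.support := fun hh => hx'q (hsub hh)
      refine ⟨m, hm, Walk.cons h r', hr'.cons hx', ?_, ?_⟩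
      · intro z hz
        rw [Walk.support_cons] at hz ⊢
        rcases List.mem_cons.1 hz with rfl | hz
        · exact List.mem_cons_self
        · exact List.mem_cons_of_mem _ (hsub hz)
      · intro z hz hzp
        rw [Walk.support_cons] at hz
        rcases List.mem_cons.1 hz with rfl | hz
        · exact absurd hzp hx
        · exact hlast z hz hzp

/-- The key structural lemma: for any vertex `x` and path `p`, there is a "median"
vertex `m` on `p` through which all distances from `x` to `p` factor. -/
lemma exists_median [DecidableEq V] (hT : G.IsTree) {w : Sym2 V → ℝ} (hw : ∀ e ∈ G.edgeSet, 0 < w e)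
    {u v : V} (p : G.Walk u v) (hp : p.IsPath) (x : V) :
    ∃ m ∈ p.support, ∀ y ∈ p.support,
      tdist hT w x y = tdist hT w x m + tdist hT w m y := by
  obtain ⟨m, hm, r, hr, _, hlast⟩ :=
    first_hit p (tpath hT x u) (tpath_isPath hT x u) p.start_mem_support
  refine ⟨m, hm, fun y hy => ?_⟩
  obtain ⟨s, hs, hssub⟩ := exists_path_within hp hm hy
  have hrs : (r.append s).IsPath := by
    apply isPath_append hr hs
    intro a har has
    exact hlast a har (hssub a has)
  rw [tdist_eq hT w (r.append s) hrs, walkWeight_append,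
    tdist_eq hT w r hr, tdist_eq hT w s hs]

/-- Splitting the distance along a path at a support vertex. -/
lemma tdist_split [DecidableEq V] (hT : G.IsTree) (w : Sym2 V → ℝ) {u v : V} (p : G.Walk u v)
    (hp : p.IsPath) {m : V} (hm : m ∈ p.support) :
    tdist hT w u v = tdist hT w u m + tdist hT w m v := by
  rw [tdist_eq hT w p hp, ← p.take_spec hm, walkWeight_append,
    ← tdist_eq hT w (p.takeUntil m hm) (hp.takeUntil hm),
    ← tdist_eq hT w (p.dropUntil m hm) (hp.dropUntil hm)]

/-- Gromov-product formula for the distance from a vertex to a path in a tree. -/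
lemma distToPath_eq [DecidableEq V] (hT : G.IsTree) {w : Sym2 V → ℝ} (hw : ∀ e ∈ G.edgeSet, 0 < w e)
    {u v : V} (p : G.Walk u v) (hp : p.IsPath) (x : V) :
    distToPath hT w x p =
      (tdist hT w x u + tdist hT w x v - tdist hT w u v) / 2 := by
  obtain ⟨m, hm, hmed⟩ := exists_median hT hw p hp x
  have hInf : distToPath hT w x p = tdist hT w x m := by
    apply IsLeast.csInf_eq
    constructor
    · exact ⟨m, hm, rfl⟩
    · rintro r ⟨y, hy, rfl⟩
      rw [hmed y hy]
      have := tdist_nonneg hT hw m y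
      linarith
  have hu := hmed u p.start_mem_support
  have hv := hmed v p.end_mem_support
  have huv := tdist_split hT w p hp hm
  have hsymm := tdist_symm hT w u m
  rw [hInf]
  linarith

end Helpers

/-- the leaf-status of the unique `u`-`v`-path `p` satisfies
`ℓ(p) = (ℓ(u) + ℓ(v) - |L(T)| · d(u,v)) / 2`. -/
theorem stmt1 {V : Type*} [Fintype V] {G : SimpleGraph V} [DecidableRel G.Adj]
    (hT : G.IsTree) (w : Sym2 V → ℝ) (hw : ∀ e ∈ G.edgeSet, 0 < w e)
    (u v : V) (p : G.Walk u v) (hp : p.IsPath) :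
    pathLeafStatus hT w p =
      (leafStatus hT w u + leafStatus hT w v
        - ((leaves G).card : ℝ) * tdist hT w u v) / 2 := by
  classical
  have key : ∀ x ∈ leaves G, distToPath hT w x p =
      (tdist hT w u x + tdist hT w v x - tdist hT w u v) / 2 := by
    intro x _
    rw [distToPath_eq hT hw p hp x, tdist_symm hT w x u, tdist_symm hT w x v]
  rw [pathLeafStatus, Finset.sum_congr rfl key, ← Finset.sum_div, leafStatus, leafStatus]
  congr 1
  rw [Finset.sum_sub_distrib, Finset.sum_add_distrib, Finset.sum_const, nsmul_eq_mul]
end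
end

section
/- Let T be a tree with positive edge weights and no degree-2 vertices, and let (v_0, v_1, ..., v_k) be a path in T with consecutive vertices adjacent. Then the sets L^{v_i v_{i+1}}_{v_i} of leaves closer to v_i than to v_{i+1} are strictly increasing in i: L^{v_i v_{i+1}}_{v_i} ⊊ L^{v_{i+1} v_{i+2}}_{v_{i+1}} for all 0 ≤ i ≤ k−2. -/
open SimpleGraph Finset

noncomputable section

variable {V : Type*}

section Aux

variable {G : SimpleGraph V}

lemma tpath_unique (hT : G.IsTree) {x y : V} (p : G.Walk x y) (hp : p.IsPath) :
    p = tpath hT x y :=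
  (hT.existsUnique_path x y).choose_spec.2 p hp

lemma tpath_reverse (hT : G.IsTree) (x y : V) : tpath hT y x = (tpath hT x y).reverse :=
  (tpath_unique hT _ ((tpath_isPath hT x y).reverse)).symm

lemma mem_support_symm (hT : G.IsTree) {x y z : V} :
    z ∈ (tpath hT x y).support ↔ z ∈ (tpath hT y x).support := by
  rw [tpath_reverse hT x y, Walk.support_reverse, List.mem_reverse]

lemma tpath_nil (hT : G.IsTree) (x : V) : tpath hT x x = Walk.nil :=
  (tpath_unique hT _ Walk.IsPath.nil).symm

lemma tpath_adj (hT : G.IsTree) {u v : V} (h : G.Adj u v) :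
    tpath hT u v = Walk.cons h Walk.nil :=
  (tpath_unique hT _ (by simp [Walk.cons_isPath_iff, h.ne])).symm

lemma tdist_adj (hT : G.IsTree) (w : Sym2 V → ℝ) {u v : V} (h : G.Adj u v) :
    tdist hT w u v = w s(u, v) := by
  simp [tdist, tpath_adj hT h, walkWeight]

lemma tpath_takeUntil [DecidableEq V] (hT : G.IsTree) {x y z : V}
    (hz : z ∈ (tpath hT x y).support) :
    (tpath hT x y).takeUntil z hz = tpath hT x z :=
  tpath_unique hT _ ((tpath_isPath hT x y).takeUntil hz)

lemma tpath_dropUntil [DecidableEq V] (hT : G.IsTree) {x y z : V}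
    (hz : z ∈ (tpath hT x y).support) :
    (tpath hT x y).dropUntil z hz = tpath hT z y :=
  tpath_unique hT _ ((tpath_isPath hT x y).dropUntil hz)

lemma tdist_split_s5 (hT : G.IsTree) (w : Sym2 V → ℝ) {x y z : V}
    (hz : z ∈ (tpath hT x y).support) :
    tdist hT w x y = tdist hT w x z + tdist hT w z y := by
  classical
  conv_lhs => rw [tdist, ← (tpath hT x y).take_spec hz]
  rw [walkWeight_append, tpath_takeUntil hT hz, tpath_dropUntil hT hz]
  rfl

lemma support_sub_right (hT : G.IsTree) {x y z : V}
    (hz : z ∈ (tpath hT x y).support) :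
    (tpath hT z y).support ⊆ (tpath hT x y).support := by
  classical
  rw [← tpath_dropUntil hT hz]
  exact Walk.support_dropUntil_subset _ _

lemma tpath_concat (hT : G.IsTree) {x u v : V} (h : G.Adj u v)
    (hv : v ∉ (tpath hT x u).support) :
    tpath hT x v = (tpath hT x u).concat h := by
  refine (tpath_unique hT _ ?_).symm
  rw [Walk.isPath_def, Walk.support_concat, List.nodup_append]
  refine ⟨(tpath_isPath hT x u).2, List.nodup_singleton v, ?_⟩
  intro a ha b hb hab
  simp only [List.mem_singleton] at hb
  subst hb hab
  exact hv ha

lemma tdist_concat (hT : G.IsTree) (w : Sym2 V → ℝ) {x u v : V} (h : G.Adj u v)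
    (hv : v ∉ (tpath hT x u).support) :
    tdist hT w x v = tdist hT w x u + w s(u, v) := by
  rw [tdist, tpath_concat hT h hv, Walk.concat_eq_append, walkWeight_append]
  simp [walkWeight, tdist]

lemma side_iff (hT : G.IsTree) (w : Sym2 V → ℝ) (hw : ∀ e ∈ G.edgeSet, 0 < w e)
    {u v : V} (h : G.Adj u v) (x : V) :
    tdist hT w x u < tdist hT w x v ↔ v ∉ (tpath hT x u).support := by
  constructor
  · intro hlt hv
    have h1 : tdist hT w x u = tdist hT w x v + tdist hT w v u := tdist_split_s5 hT w hv
    have h2 : tdist hT w v u = w s(v, u) := tdist_adj hT w h.symm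
    have h3 : 0 < w s(v, u) := hw _ h.symm
    linarith
  · intro hv
    have := tdist_concat hT w h hv
    have h3 : 0 < w s(u, v) := hw _ h
    linarith

lemma mem_support_two (hT : G.IsTree) {p q r : V} (h1 : G.Adj p q) (h2 : G.Adj q r)
    (hpr : p ≠ r) : q ∈ (tpath hT p r).support := by
  have : tpath hT p r = Walk.cons h1 (Walk.cons h2 Walk.nil) :=
    (tpath_unique hT _ (by simp [Walk.cons_isPath_iff, h1.ne, h2.ne, hpr])).symm
  rw [this]; simp

/-- Key step: if `x` is on the `u`-side of edge `ub`, then `x` is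
on the `b`-side of any other edge `bt` at `b`. -/
lemma side_step (hT : G.IsTree) {x u b t : V} (hub : G.Adj u b) (hbt : G.Adj b t)
    (hut : u ≠ t) (hx : b ∉ (tpath hT x u).support) :
    t ∉ (tpath hT x b).support := by
  intro ht
  rw [tpath_concat hT hub hx, Walk.support_concat,
    List.mem_append, List.mem_singleton] at ht
  rcases ht with ht | ht
  · exact hx (support_sub_right hT ht (mem_support_two hT hbt.symm hub.symm hut.symm))
  · exact hbt.ne' ht


lemma support_getLast? {a b : V} (p : G.Walk a b) : p.support.getLast? = some b := by
  rw [List.getLast?_eq_getLast_of_ne_nil p.support_ne_nil]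
  exact congrArg some p.getLast_support

lemma penult_eq (hT : G.IsTree) {b x z : V} (hzx : G.Adj z x)
    (hz : z ∈ (tpath hT b x).support) :
    (tpath hT b x).support = (tpath hT b z).support ++ [x] := by
  classical
  conv_lhs => rw [← (tpath hT b x).take_spec hz]
  rw [Walk.support_append, tpath_takeUntil hT hz, tpath_dropUntil hT hz, tpath_adj hT hzx]
  simp

lemma penult_unique (hT : G.IsTree) {b x z₁ z₂ : V}
    (h1 : G.Adj z₁ x) (m1 : z₁ ∈ (tpath hT b x).support)
    (h2 : G.Adj z₂ x) (m2 : z₂ ∈ (tpath hT b x).support) : z₁ = z₂ := by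
  have e1 := penult_eq hT h1 m1
  have e2 := penult_eq hT h2 m2
  have hs : (tpath hT b z₁).support = (tpath hT b z₂).support :=
    List.append_left_injective [x] (e1.symm.trans e2)
  have g1 := support_getLast? (tpath hT b z₁)
  have g2 := support_getLast? (tpath hT b z₂)
  rw [hs, g2] at g1
  exact (Option.some_injective _ g1).symm

lemma exists_leaf [Fintype V] [DecidableRel G.Adj] (hT : G.IsTree) (w : Sym2 V → ℝ)
    (hw : ∀ e ∈ G.edgeSet, 0 < w e) (hdeg : ∀ x : V, G.degree x ≠ 2)
    {a b : V} (hab : G.Adj a b) :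
    ∃ x, G.degree x = 1 ∧ a ∉ (tpath hT b x).support := by
  classical
  set S : Finset V := Finset.univ.filter (fun x => a ∉ (tpath hT b x).support) with hS
  have hbS : b ∈ S := by
    simp [hS, tpath_nil hT b, hab.ne]
  obtain ⟨x, hxS, hmax⟩ := S.exists_max_image (fun x => tdist hT w b x) ⟨b, hbS⟩
  have hxa : a ∉ (tpath hT b x).support := by simpa [hS] using hxS
  refine ⟨x, ?_, hxa⟩
  by_contra hx1
  have hax : a ≠ x := fun h => hxa (h ▸ Walk.end_mem_support _)
  have hnb : ∃ y, G.Adj x y := by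
    cases hp : tpath hT x a with
    | nil => exact absurd rfl hax.symm
    | cons h q => exact ⟨_, h⟩
  obtain ⟨y, hy⟩ := hnb
  have hdeg3 : 3 ≤ G.degree x := by
    have h0 : 0 < G.degree x := by
      rw [← card_neighborFinset_eq_degree]
      exact Finset.card_pos.2 ⟨y, (G.mem_neighborFinset x y).2 hy⟩
    have h2 := hdeg x
    omega
  have hsub : G.neighborFinset x ⊆
      insert a ((G.neighborFinset x).filter (fun z => z ∈ (tpath hT b x).support)) := by
    intro z hz
    by_contra hzc
    simp only [Finset.mem_insert, Finset.mem_filter, not_or, not_and] at hzc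
    obtain ⟨hza, hzs⟩ := hzc
    have hzs' : z ∉ (tpath hT b x).support := hzs hz
    have hadjxz : G.Adj x z := (G.mem_neighborFinset x z).1 hz
    have h1 : tdist hT w b z = tdist hT w b x + w s(x, z) := tdist_concat hT w hadjxz hzs'
    have h2 : z ∈ S := by
      simp only [hS, Finset.mem_filter, Finset.mem_univ, true_and]
      rw [tpath_concat hT hadjxz hzs', Walk.support_concat]
      simp only [List.mem_append, List.mem_singleton]
      rintro (h | h)
      · exact hxa h
      · exact hza h.symm
    have h3 := hmax z h2
    have hpos : 0 < w s(x, z) := hw _ hadjxz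
    linarith
  have hfil : ((G.neighborFinset x).filter
      (fun z => z ∈ (tpath hT b x).support)).card ≤ 1 := by
    rw [Finset.card_le_one]
    intro z₁ hz₁ z₂ hz₂
    simp only [Finset.mem_filter, G.mem_neighborFinset] at hz₁ hz₂
    exact penult_unique hT hz₁.1.symm hz₁.2 hz₂.1.symm hz₂.2
  have : G.degree x ≤ 2 := by
    rw [← card_neighborFinset_eq_degree]
    calc (G.neighborFinset x).card ≤ _ := Finset.card_le_card hsub
      _ ≤ _ + 1 := Finset.card_insert_le _ _
      _ ≤ 2 := by omega
  omega

end Aux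

/-- along a path `(v_0, …, v_k)` in a tree with no degree-2
vertices, the sets `L^{v_i v_{i+1}}_{v_i}` are strictly increasing. -/
theorem stmt5 {V : Type*} [Fintype V] {G : SimpleGraph V} [DecidableRel G.Adj]
    (hT : G.IsTree) (w : Sym2 V → ℝ) (hw : ∀ e ∈ G.edgeSet, 0 < w e)
    (hdeg : ∀ x : V, G.degree x ≠ 2)
    (k : ℕ) (v : ℕ → V)
    (hinj : ∀ i j, i ≤ k → j ≤ k → v i = v j → i = j)
    (hadj : ∀ i, i < k → G.Adj (v i) (v (i + 1))) :
    ∀ i, i + 2 ≤ k →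
      Lside hT w (v i) (v (i + 1)) ⊂ Lside hT w (v (i + 1)) (v (i + 2)) := by
  classical
  intro i hik
  have hab : G.Adj (v i) (v (i + 1)) := hadj i (by omega)
  have hbc : G.Adj (v (i + 1)) (v (i + 2)) := hadj (i + 1) (by omega)
  have hac : v i ≠ v (i + 2) := fun h => by
    have := hinj i (i + 2) (by omega) (by omega) h
    omega
  have hsub : Lside hT w (v i) (v (i + 1)) ⊆ Lside hT w (v (i + 1)) (v (i + 2)) := by
    intro x hx
    rw [Lside, Finset.mem_filter] at hx ⊢
    refine ⟨hx.1, ?_⟩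
    have h1 : v (i + 1) ∉ (tpath hT x (v i)).support := (side_iff hT w hw hab x).1 hx.2
    exact (side_iff hT w hw hbc x).2 (side_step hT hab hbc hac h1)
  rw [Finset.ssubset_iff_of_subset hsub]
  obtain ⟨u, hu1, hu2, hu3⟩ : ∃ u, G.Adj (v (i + 1)) u ∧ u ≠ v i ∧ u ≠ v (i + 2) := by
    by_contra hcon
    push_neg at hcon
    have hss : G.neighborFinset (v (i + 1)) ⊆ {v i, v (i + 2)} := by
      intro z hz
      have hzadj := (G.mem_neighborFinset _ _).1 hz
      simp only [Finset.mem_insert, Finset.mem_singleton]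
      by_contra hzc
      push_neg at hzc
      exact hzc.2 (hcon z hzadj hzc.1)
    have hsup : ({v i, v (i + 2)} : Finset V) ⊆ G.neighborFinset (v (i + 1)) := by
      intro z hz
      simp only [Finset.mem_insert, Finset.mem_singleton] at hz
      rcases hz with h | h <;> subst h
      · exact (G.mem_neighborFinset _ _).2 hab.symm
      · exact (G.mem_neighborFinset _ _).2 hbc
    have hdeg2 : G.degree (v (i + 1)) = 2 := by
      rw [← card_neighborFinset_eq_degree, Finset.Subset.antisymm hss hsup,
        Finset.card_insert_of_notMem (by simp [hac]), Finset.card_singleton]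
    exact hdeg _ hdeg2
  obtain ⟨x, hx1, hx2⟩ := exists_leaf hT w hw hdeg hu1
  have hx2' : v (i + 1) ∉ (tpath hT x u).support := fun m =>
    hx2 ((mem_support_symm hT).1 m)
  refine ⟨x, ?_, ?_⟩
  · rw [Lside, Finset.mem_filter]
    exact ⟨by simp [leaves, hx1], (side_iff hT w hw hbc x).2
      (side_step hT hu1.symm hbc hu3 hx2')⟩
  · rw [Lside, Finset.mem_filter]
    rintro ⟨-, hlt⟩
    have h1 : v i ∉ (tpath hT x (v (i + 1))).support :=
      side_step hT hu1.symm hab.symm hu2 hx2'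
    have h2 := (side_iff hT w hw hab.symm x).2 h1
    linarith
end
end
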